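/- Expectation formula for I↑_max with a classical register: Let A, B be finite index types, X a finite nonempty type, p a strictly positive probability vector on X, and for each x ∈ X let ρ^x_{AB} be a density matrix on A ⊗ B. Set ρ_{ABX} := Σ_x p(x) · ρ^x_{AB} ⊗ E_xx (a matrix indexed by (A×B)×X) and ρ_A := Σ_x p(x) · Tr_B(ρ^x_{AB}). Then exp( I↑_max(A:BX)_ρ ) = Σ_x p(x) · exp( inf over density matrices τ_B on B of D_max( ρ^x_{AB} ‖ ρ_A ⊗ τ_B ) ), where I↑_max(A:BX)_ρ := inf over density matrices σ_{BX} on B ⊗ X of D_max( ρ_{ABX} ‖ ρ_A ⊗ σ_{BX} ). All the infima on both sides are finite real numbers. -/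

import Mathlib

set_option linter.unusedSectionVars false
set_option maxHeartbeats 1000000


open Matrix
open scoped ComplexOrder Kronecker

/-- The max-relative entropy `D_max(P‖Q)`. -/
noncomputable def Dmax {n : Type*} [Fintype n] (P Q : Matrix n n ℂ) : EReal :=
  sInf {x : EReal | ∃ lam : ℝ, x = (lam : EReal) ∧ (Real.exp lam • Q - P).PosSemidef}

/-- A density matrix: positive semidefinite with trace 1. -/
def IsDensity {n : Type*} [Fintype n] (ρ : Matrix n n ℂ) : Prop :=
  ρ.PosSemidef ∧ ρ.trace = 1

/-- Partial trace over the second tensor factor. -/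
noncomputable def ptraceSnd {S X : Type*} [Fintype S] [Fintype X]
    (ρ : Matrix (S × X) (S × X) ℂ) : Matrix S S ℂ :=
  Matrix.of fun s s' => ∑ x, ρ (s, x) (s', x)


section Helpers

variable {n m : Type*} [Fintype n] [Fintype m]

lemma real_smul_eq (r : ℝ) (M : Matrix n m ℂ) : r • M = (r : ℂ) • M := by
  ext i j; simp [Matrix.smul_apply, Complex.real_smul]

lemma psd_diag_nonneg {M : Matrix n n ℂ} (hM : M.PosSemidef) (i : n) : 0 ≤ M i i := by
  classical
  have h := hM.dotProduct_mulVec_nonneg (Pi.single i 1)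
  simpa [dotProduct, mulVec, Pi.single_apply] using h

lemma psd_trace_nonneg {M : Matrix n n ℂ} (hM : M.PosSemidef) : 0 ≤ M.trace := by
  rw [Matrix.trace]
  exact Finset.sum_nonneg fun i _ => psd_diag_nonneg hM i

lemma psd_smul_c {c : ℂ} (hc : 0 ≤ c) {M : Matrix n n ℂ} (hM : M.PosSemidef) :
    (c • M).PosSemidef := by
  have hcr : (starRingEnd ℂ) c = c := by
    rw [Complex.conj_eq_iff_im]
    exact (Complex.nonneg_iff.mp hc).2.symm
  refine .of_dotProduct_mulVec_nonneg ?_ ?_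
  · ext i j
    simp only [Matrix.conjTranspose_apply, Matrix.smul_apply, smul_eq_mul, star_mul',
      RingHom.coe_coe]
    rw [show star (M j i) = M i j from hM.1.apply i j]
    rw [show star c = c from hcr]
  · intro x
    rw [Matrix.smul_mulVec, dotProduct_smul]
    exact mul_nonneg hc (hM.dotProduct_mulVec_nonneg x)

lemma psd_eq_ct {n : Type*} [Fintype n] {M : Matrix n n ℂ} (hM : M.PosSemidef) :
    ∃ C : Matrix n n ℂ, M = Cᴴ * C := by
  classical
  open scoped MatrixOrder Matrix.Norms.L2Operator in
  obtain ⟨B, hB⟩ := CStarAlgebra.nonneg_iff_eq_star_mul_self.mp hM.nonneg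
  exact ⟨B, hB⟩

lemma kron_conjTranspose (M : Matrix n n ℂ) (N : Matrix m m ℂ) :
    (M ⊗ₖ N)ᴴ = Mᴴ ⊗ₖ Nᴴ := by
  ext ⟨i, j⟩ ⟨k, l⟩
  simp [Matrix.conjTranspose_apply, Matrix.kroneckerMap_apply]

lemma kron_isHermitian {M : Matrix n n ℂ} {N : Matrix m m ℂ}
    (hM : M.IsHermitian) (hN : N.IsHermitian) : (M ⊗ₖ N).IsHermitian := by
  unfold Matrix.IsHermitian
  rw [kron_conjTranspose, hM.eq, hN.eq]

lemma psd_kron {M : Matrix n n ℂ} {N : Matrix m m ℂ}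
    (hM : M.PosSemidef) (hN : N.PosSemidef) : (M ⊗ₖ N).PosSemidef := by
  obtain ⟨C, rfl⟩ := psd_eq_ct hM
  obtain ⟨D, rfl⟩ := psd_eq_ct hN
  rw [Matrix.mul_kronecker_mul, ← kron_conjTranspose]
  exact Matrix.posSemidef_conjTranspose_mul_self _

lemma psd_sum {ι : Type*} (s : Finset ι) (f : ι → Matrix n n ℂ)
    (h : ∀ i ∈ s, (f i).PosSemidef) : (∑ i ∈ s, f i).PosSemidef := by
  classical
  induction s using Finset.induction with
  | empty => simpa using Matrix.PosSemidef.zero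
  | @insert a s hni ih =>
      rw [Finset.sum_insert hni]
      exact (h _ (Finset.mem_insert_self _ _)).add
        (ih fun i hi => h i (Finset.mem_insert_of_mem hi))

lemma psd_blockDiagonal {ι : Type*} [Fintype ι] [DecidableEq ι]
    {f : ι → Matrix n n ℂ} (h : ∀ i, (f i).PosSemidef) :
    (Matrix.blockDiagonal f).PosSemidef := by
  classical
  choose C hC using fun i => psd_eq_ct (h i)
  have : Matrix.blockDiagonal f = (Matrix.blockDiagonal C)ᴴ * Matrix.blockDiagonal C := by
    rw [Matrix.blockDiagonal_conjTranspose, ← Matrix.blockDiagonal_mul]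
    exact congrArg _ (funext hC)
  rw [this]
  exact Matrix.posSemidef_conjTranspose_mul_self _

lemma ptraceSnd_trace {S X : Type*} [Fintype S] [Fintype X] (ρ : Matrix (S × X) (S × X) ℂ) :
    (ptraceSnd ρ).trace = ρ.trace := by
  simp [ptraceSnd, Matrix.trace, Matrix.diag, Fintype.sum_prod_type]

lemma ptraceSnd_psd {S X : Type*} [Fintype S] [Fintype X] {ρ : Matrix (S × X) (S × X) ℂ}
    (hρ : ρ.PosSemidef) : (ptraceSnd ρ).PosSemidef := by
  have h : ptraceSnd ρ = ∑ x : X, ρ.submatrix (fun s => (s, x)) (fun s => (s, x)) := by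
    ext s s'
    simp [ptraceSnd, Matrix.submatrix, Matrix.sum_apply]
  rw [h]
  exact psd_sum _ _ fun x _ => hρ.submatrix _

lemma ptraceSnd_isHermitian {S X : Type*} [Fintype S] [Fintype X] {ρ : Matrix (S × X) (S × X) ℂ}
    (h : ρ.IsHermitian) : (ptraceSnd ρ).IsHermitian := by
  ext s s'
  simp only [Matrix.conjTranspose_apply, ptraceSnd, Matrix.of_apply, star_sum]
  exact Finset.sum_congr rfl fun x _ => h.apply _ _

lemma isHermitian_real_smul (r : ℝ) {M : Matrix n n ℂ} (h : M.IsHermitian) :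
    (r • M).IsHermitian := by
  ext i j
  simp only [Matrix.conjTranspose_apply, Matrix.smul_apply, star_smul, star_trivial]
  rw [h.apply]

end Helpers


lemma kron_one_quad {A B : Type*} [Fintype A] [Fintype B] [DecidableEq B]
    (M : Matrix (A × B) (A × B) ℂ) (w : (A × B) → ℂ)
    (u : B → B → (A × B) → ℂ)
    (hu : u = fun b b' ac => if ac.2 = b' then w (ac.1, b) else 0) :
    dotProduct (star w) ((ptraceSnd M ⊗ₖ (1 : Matrix B B ℂ)) *ᵥ w)
        = ∑ b : B, ∑ b' : B, dotProduct (star (u b b')) (M *ᵥ (u b b')) := by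
  subst hu
  simp only [dotProduct, Matrix.mulVec, Matrix.kroneckerMap_apply, Matrix.one_apply,
    ptraceSnd, Matrix.of_apply, Fintype.sum_prod_type, Pi.star_apply,
    apply_ite (star : ℂ → ℂ), star_zero,
    mul_ite, mul_zero, mul_one, ite_mul, zero_mul, Finset.sum_ite_eq, Finset.sum_ite_eq',
    Finset.mem_univ, if_true, Finset.mul_sum, Finset.sum_mul]
  calc ∑ a : A, ∑ b : B, ∑ a' : A, ∑ b'' : B,
        star (w (a, b)) * (M (a, b'') (a', b'') * w (a', b))
      = ∑ b : B, ∑ a : A, ∑ a' : A, ∑ b'' : B,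
        star (w (a, b)) * (M (a, b'') (a', b'') * w (a', b)) := Finset.sum_comm
    _ = ∑ b : B, ∑ a : A, ∑ b'' : B, ∑ a' : A,
        star (w (a, b)) * (M (a, b'') (a', b'') * w (a', b)) :=
        Finset.sum_congr rfl fun b _ => Finset.sum_congr rfl fun a _ => Finset.sum_comm
    _ = ∑ b : B, ∑ b'' : B, ∑ a : A, ∑ a' : A,
        star (w (a, b)) * (M (a, b'') (a', b'') * w (a', b)) :=
        Finset.sum_congr rfl fun b _ => Finset.sum_comm
    _ = ∑ b : B, ∑ b' : B, ∑ a : A, ∑ b'' : B, ∑ a' : A,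
          (if b'' = b' then star (w (a, b)) * (M (a, b'') (a', b') * w (a', b)) else 0) := by
        refine Finset.sum_congr rfl fun b _ => Finset.sum_congr rfl fun b' _ =>
          Finset.sum_congr rfl fun a _ => ?_
        conv_rhs => rw [Finset.sum_comm]
        simp

lemma dot_star_self {ι : Type*} [Fintype ι] (v : ι → ℂ) :
    dotProduct (star v) v = ((∑ i, Complex.normSq (v i) : ℝ) : ℂ) := by
  push_cast
  simp [dotProduct, Complex.normSq_eq_conj_mul_self, mul_comm]

lemma quad_form_eq {ι κ : Type*} [Fintype ι] [Fintype κ] (C : Matrix κ ι ℂ) (v : ι → ℂ) :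
    dotProduct (star v) ((Cᴴ * C) *ᵥ v) = ((∑ i, Complex.normSq ((C *ᵥ v) i) : ℝ) : ℂ) := by
  rw [← Matrix.mulVec_mulVec, Matrix.dotProduct_mulVec, ← Matrix.star_mulVec, dot_star_self]

lemma key_traceout {A B : Type*} [Fintype A] [Fintype B] [DecidableEq B]
    {P : Matrix (A × B) (A × B) ℂ} (hP : P.PosSemidef) :
    (((Fintype.card B : ℝ)) • (ptraceSnd P ⊗ₖ (1 : Matrix B B ℂ)) - P).PosSemidef := by
  classical
  obtain ⟨C, rfl⟩ := psd_eq_ct hP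
  have hPh : (Cᴴ * C).IsHermitian := (Matrix.posSemidef_conjTranspose_mul_self C).1
  refine .of_dotProduct_mulVec_nonneg ?_ ?_
  · exact (isHermitian_real_smul _ (kron_isHermitian (ptraceSnd_isHermitian hPh)
      Matrix.isHermitian_one)).sub hPh
  · intro w
    set u : B → B → (A × B) → ℂ := fun b b' ac => if ac.2 = b' then w (ac.1, b) else 0 with hu
    set d : ℝ := (Fintype.card B : ℝ) with hd
    have h3 : w = ∑ b : B, u b b := by
      funext ac
      simp only [hu, Finset.sum_apply]
      simp
    have h4 : C *ᵥ w = ∑ b : B, C *ᵥ u b b := by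
      rw [h3]
      simp only [← Matrix.mulVecLin_apply, map_sum]
    have hle1 : (∑ i, Complex.normSq ((C *ᵥ w) i))
        ≤ d * ∑ b : B, ∑ i, Complex.normSq ((C *ᵥ u b b) i) := by
      rw [h4]
      calc ∑ i, Complex.normSq ((∑ b : B, C *ᵥ u b b) i)
          = ∑ i, Complex.normSq (∑ b : B, (C *ᵥ u b b) i) := by
            simp [Finset.sum_apply]
        _ ≤ ∑ i, (d * ∑ b : B, Complex.normSq ((C *ᵥ u b b) i)) := by
            refine Finset.sum_le_sum fun i _ => ?_
            calc Complex.normSq (∑ b : B, (C *ᵥ u b b) i)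
                = (‖∑ b : B, (C *ᵥ u b b) i‖) ^ 2 := (Complex.sq_norm _).symm
              _ ≤ (∑ b : B, ‖(C *ᵥ u b b) i‖) ^ 2 := by
                  exact pow_le_pow_left₀ (norm_nonneg _)
                    (norm_sum_le _ _) 2
              _ ≤ (Finset.univ.card : ℝ) * ∑ b : B, (‖(C *ᵥ u b b) i‖) ^ 2 := by
                  exact_mod_cast sq_sum_le_card_mul_sum_sq
                    (s := (Finset.univ : Finset B)) (f := fun b => ‖(C *ᵥ u b b) i‖)
              _ = d * ∑ b : B, Complex.normSq ((C *ᵥ u b b) i) := by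
                  simp [hd, Complex.sq_norm, Finset.card_univ]
        _ = d * ∑ b : B, ∑ i, Complex.normSq ((C *ᵥ u b b) i) := by
            simp only [Finset.mul_sum]
            exact Finset.sum_comm
    have hle2 : (∑ b : B, ∑ i, Complex.normSq ((C *ᵥ u b b) i))
        ≤ ∑ b : B, ∑ b' : B, ∑ i, Complex.normSq ((C *ᵥ u b b') i) := by
      refine Finset.sum_le_sum fun b _ => ?_
      exact Finset.single_le_sum
        (f := fun b' => ∑ i, Complex.normSq ((C *ᵥ u b b') i))
        (fun b' _ => Finset.sum_nonneg fun i _ => Complex.normSq_nonneg _)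
        (Finset.mem_univ b)
    have key : (∑ i, Complex.normSq ((C *ᵥ w) i))
        ≤ d * ∑ b : B, ∑ b' : B, ∑ i, Complex.normSq ((C *ᵥ u b b') i) := by
      refine hle1.trans ?_
      have hd0 : (0:ℝ) ≤ d := by positivity
      exact mul_le_mul_of_nonneg_left hle2 hd0
    rw [Matrix.sub_mulVec, dotProduct_sub, real_smul_eq, Matrix.smul_mulVec,
      dotProduct_smul, kron_one_quad (Cᴴ * C) w u hu]
    simp only [quad_form_eq, smul_eq_mul]
    have final : (0:ℝ) ≤ d * (∑ b : B, ∑ b' : B, ∑ i, Complex.normSq ((C *ᵥ u b b') i))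
        - ∑ i, Complex.normSq ((C *ᵥ w) i) := by linarith [key]
    exact_mod_cast final

lemma ereal_le_coe_of_forall (a : EReal) (c : ℝ)
    (h : ∀ ε : ℝ, 0 < ε → a ≤ ((c + ε : ℝ) : EReal)) : a ≤ (c : EReal) := by
  induction a using EReal.rec with
  | bot => exact bot_le
  | coe x =>
      rw [EReal.coe_le_coe_iff]
      by_contra hx
      push_neg at hx
      have h2 := h ((x - c) / 2) (by linarith)
      rw [EReal.coe_le_coe_iff] at h2
      linarith
  | top => exact absurd (h 1 one_pos) (EReal.coe_lt_top (c + 1)).not_ge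

lemma nested_sInf {α : Type*} (Pr : α → Prop) (F : α → ℝ → Prop)
    (hne : ∃ lam σ, Pr σ ∧ F σ lam) (hlb : ∀ σ lam, Pr σ → F σ lam → 0 ≤ lam) :
    sInf {z : EReal | ∃ σ, Pr σ ∧ z = sInf {x : EReal | ∃ lam : ℝ, x = (lam : EReal) ∧ F σ lam}}
      = ((sInf {lam : ℝ | ∃ σ, Pr σ ∧ F σ lam} : ℝ) : EReal) := by
  set S := {lam : ℝ | ∃ σ, Pr σ ∧ F σ lam} with hS
  have hSne : S.Nonempty := by
    obtain ⟨lam, σ, hσ, hF⟩ := hne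
    exact ⟨lam, σ, hσ, hF⟩
  have hSbdd : BddBelow S := ⟨0, fun lam ⟨σ, hσ, hF⟩ => hlb σ lam hσ hF⟩
  apply le_antisymm
  · apply ereal_le_coe_of_forall
    intro ε hε
    obtain ⟨lam, hlamS, hlt⟩ := Real.lt_sInf_add_pos hSne hε
    obtain ⟨σ, hσ, hF⟩ := hlamS
    calc sInf {z : EReal | ∃ σ, Pr σ ∧
            z = sInf {x : EReal | ∃ lam : ℝ, x = (lam : EReal) ∧ F σ lam}}
        ≤ sInf {x : EReal | ∃ l : ℝ, x = (l : EReal) ∧ F σ l} := sInf_le ⟨σ, hσ, rfl⟩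
      _ ≤ (lam : EReal) := sInf_le ⟨lam, rfl, hF⟩
      _ ≤ _ := EReal.coe_le_coe_iff.mpr hlt.le
  · apply le_sInf
    rintro z ⟨σ, hσ, rfl⟩
    apply le_sInf
    rintro x ⟨lam, rfl, hF⟩
    exact EReal.coe_le_coe_iff.mpr (csInf_le hSbdd ⟨σ, hσ, hF⟩)

/-- Expectation formula for `I↑_max` with a classical register:
`exp(I↑_max(A:BX)) = Σ_x p(x) exp(inf_τ D_max(ρ^x_AB ‖ ρ_A ⊗ τ_B))`,
with all infima finite real numbers. -/
theorem iupmax_expectation_classical_register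
    {A B : Type*} [Fintype A] [Fintype B]
    {X : Type*} [Fintype X] [DecidableEq X] [Nonempty X]
    (p : X → ℝ) (hp : ∀ x, 0 < p x) (hpsum : ∑ x, p x = 1)
    (ρAB : X → Matrix (A × B) (A × B) ℂ) (hρ : ∀ x, IsDensity (ρAB x)) :
    -- the classical–quantum state `ρ_{ABX} = Σ_x p(x) ρ^x_{AB} ⊗ E_xx`,
    -- indexed so that the first system is `A` and the second is `B × X`
    let ρABX : Matrix (A × (B × X)) (A × (B × X)) ℂ :=
      Matrix.of fun r c =>
        if r.2.2 = c.2.2 then (p r.2.2 : ℂ) * ρAB r.2.2 (r.1, r.2.1) (c.1, c.2.1) else 0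
    let ρA : Matrix A A ℂ := ∑ x, p x • ptraceSnd (ρAB x)
    -- `I↑_max(A:BX)`
    let L : EReal := sInf {z : EReal | ∃ σ : Matrix (B × X) (B × X) ℂ,
      IsDensity σ ∧ z = Dmax ρABX (ρA ⊗ₖ σ)}
    -- the conditional quantities `inf_τ D_max(ρ^x_AB ‖ ρ_A ⊗ τ_B)`
    let I : X → EReal := fun x => sInf {z : EReal | ∃ τ : Matrix B B ℂ,
      IsDensity τ ∧ z = Dmax (ρAB x) (ρA ⊗ₖ τ)}
    L ≠ ⊤ ∧ L ≠ ⊥ ∧ (∀ x, I x ≠ ⊤ ∧ I x ≠ ⊥) ∧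
      Real.exp L.toReal = ∑ x, p x * Real.exp (I x).toReal := by
  classical
  intro ρABX ρA L I
  have hρABX_apply : ∀ r c : A × (B × X), ρABX r c =
      if r.2.2 = c.2.2 then (p r.2.2 : ℂ) * ρAB r.2.2 (r.1, r.2.1) (c.1, c.2.1) else 0 :=
    fun r c => rfl
  have hρA_def : ρA = ∑ x, p x • ptraceSnd (ρAB x) := rfl
  -- B is nonempty
  have hB : Nonempty B := by
    by_contra h
    have hBE : IsEmpty B := not_nonempty_iff.mp h
    have hABE : IsEmpty (A × B) := ⟨fun ab => hBE.elim ab.2⟩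
    have h1 := (hρ (Classical.arbitrary X)).2
    rw [Matrix.trace] at h1
    simp [Finset.univ_eq_empty] at h1
  -- traces
  have htr : ∀ x, (ρAB x).trace = 1 := fun x => (hρ x).2
  have hρA_psd : ρA.PosSemidef := by
    rw [hρA_def]
    refine psd_sum _ _ fun x _ => ?_
    rw [real_smul_eq]
    exact psd_smul_c (by exact_mod_cast (hp x).le) (ptraceSnd_psd (hρ x).1)
  have hρA_tr : ρA.trace = 1 := by
    rw [hρA_def, Matrix.trace_sum]
    have h1 : ∀ x : X, (p x • ptraceSnd (ρAB x)).trace = (p x : ℂ) := by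
      intro x
      rw [real_smul_eq, Matrix.trace_smul, ptraceSnd_trace, htr x, smul_eq_mul, mul_one]
    rw [Finset.sum_congr rfl fun x _ => h1 x]
    rw [← Complex.ofReal_sum, hpsum, Complex.ofReal_one]
  have hρABX_tr : ρABX.trace = 1 := by
    have h1 : ρABX.trace = ∑ x : X, (p x : ℂ) * (ρAB x).trace := by
      have e1 : ρABX.trace = ∑ a : A, ∑ b : B, ∑ x : X, (p x : ℂ) * ρAB x (a, b) (a, b) := by
        rw [Matrix.trace, Fintype.sum_prod_type]
        refine Finset.sum_congr rfl fun a _ => ?_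
        rw [Fintype.sum_prod_type]
        refine Finset.sum_congr rfl fun b _ => Finset.sum_congr rfl fun x _ => ?_
        simp [Matrix.diag, hρABX_apply]
      have e2 : ∀ x : X, (p x : ℂ) * (ρAB x).trace
          = ∑ a : A, ∑ b : B, (p x : ℂ) * ρAB x (a, b) (a, b) := by
        intro x
        rw [Matrix.trace, Fintype.sum_prod_type, Finset.mul_sum]
        exact Finset.sum_congr rfl fun a _ => by rw [Finset.mul_sum]; rfl
      rw [e1, Finset.sum_congr rfl fun x _ => e2 x]
      calc ∑ a : A, ∑ b : B, ∑ x : X, (p x : ℂ) * ρAB x (a, b) (a, b)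
          = ∑ a : A, ∑ x : X, ∑ b : B, (p x : ℂ) * ρAB x (a, b) (a, b) :=
            Finset.sum_congr rfl fun a _ => Finset.sum_comm
        _ = ∑ x : X, ∑ a : A, ∑ b : B, (p x : ℂ) * ρAB x (a, b) (a, b) := Finset.sum_comm
    rw [h1]
    rw [Finset.sum_congr rfl fun x _ => by rw [htr x, mul_one]]
    rw [← Complex.ofReal_sum, hpsum, Complex.ofReal_one]
  -- the real feasible sets
  set SL : Set ℝ := {lam : ℝ | ∃ σ : Matrix (B × X) (B × X) ℂ,
    IsDensity σ ∧ (Real.exp lam • (ρA ⊗ₖ σ) - ρABX).PosSemidef} with hSLdef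
  set SI : X → Set ℝ := fun x => {lam : ℝ | ∃ τ : Matrix B B ℂ,
    IsDensity τ ∧ (Real.exp lam • (ρA ⊗ₖ τ) - ρAB x).PosSemidef} with hSIdef
  -- lower bounds
  have hlbL : ∀ (σ : Matrix (B × X) (B × X) ℂ) (lam : ℝ), IsDensity σ →
      (Real.exp lam • (ρA ⊗ₖ σ) - ρABX).PosSemidef → 0 ≤ lam := by
    intro σ lam hσ hpsd
    have h0 := psd_trace_nonneg hpsd
    rw [Matrix.trace_sub, real_smul_eq, Matrix.trace_smul, Matrix.trace_kronecker, hρA_tr,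
      hρABX_tr, one_mul, hσ.2, smul_eq_mul, mul_one] at h0
    have h1 : (1:ℝ) ≤ Real.exp lam := by
      have h2 := (Complex.nonneg_iff.mp h0).1
      rwa [Complex.sub_re, Complex.ofReal_re, Complex.one_re, sub_nonneg] at h2
    exact Real.one_le_exp_iff.mp h1
  have hlbI : ∀ (x : X) (τ : Matrix B B ℂ) (lam : ℝ), IsDensity τ →
      (Real.exp lam • (ρA ⊗ₖ τ) - ρAB x).PosSemidef → 0 ≤ lam := by
    intro x τ lam hτ hpsd
    have h0 := psd_trace_nonneg hpsd
    rw [Matrix.trace_sub, real_smul_eq, Matrix.trace_smul, Matrix.trace_kronecker, hρA_tr,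
      htr x, one_mul, hτ.2, smul_eq_mul, mul_one] at h0
    have h1 : (1:ℝ) ≤ Real.exp lam := by
      have h2 := (Complex.nonneg_iff.mp h0).1
      rwa [Complex.sub_re, Complex.ofReal_re, Complex.one_re, sub_nonneg] at h2
    exact Real.one_le_exp_iff.mp h1
  have hSIbdd : ∀ x, BddBelow (SI x) := fun x =>
    ⟨0, fun lam ⟨τ, hτ, hF⟩ => hlbI x τ lam hτ hF⟩
  have hSLbdd : BddBelow SL := ⟨0, fun lam ⟨σ, hσ, hF⟩ => hlbL σ lam hσ hF⟩
  -- feasibility for each x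
  have hfeas : ∀ x : X, (SI x).Nonempty := by
    intro x
    have hcard : (0:ℝ) < (Fintype.card B : ℝ) := by
      have := Fintype.card_pos (α := B)
      exact_mod_cast this
    set dB : ℝ := (Fintype.card B : ℝ) with hdB
    refine ⟨Real.log (dB ^ 2 / p x), ((dB : ℂ))⁻¹ • (1 : Matrix B B ℂ), ⟨?_, ?_⟩, ?_⟩
    · refine psd_smul_c ?_ Matrix.PosSemidef.one
      rw [← Complex.ofReal_inv, Complex.zero_le_real]
      positivity
    · rw [Matrix.trace_smul, Matrix.trace_one, smul_eq_mul]
      rw [hdB]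
      push_cast
      field_simp
    · rw [Real.exp_log (by have := hp x; positivity)]
      have hk : ρA ⊗ₖ (((dB : ℂ))⁻¹ • (1 : Matrix B B ℂ))
          = ((dB : ℂ))⁻¹ • (ρA ⊗ₖ (1 : Matrix B B ℂ)) := Matrix.kronecker_smul _ _ _
      rw [hk, real_smul_eq, smul_smul]
      have hsc : ((dB ^ 2 / p x : ℝ) : ℂ) * ((dB : ℂ))⁻¹ = ((dB / p x : ℝ) : ℂ) := by
        have hd0 : (dB : ℂ) ≠ 0 := by exact_mod_cast hcard.ne'
        push_cast
        rw [div_mul_eq_mul_div, sq, mul_inv_cancel_right₀ hd0]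
      rw [hsc]
      -- decompose
      set KT : Matrix (A × B) (A × B) ℂ := ptraceSnd (ρAB x) ⊗ₖ (1 : Matrix B B ℂ) with hKT
      have hrest : (ρA - p x • ptraceSnd (ρAB x)).PosSemidef := by
        have e1 : ρA - p x • ptraceSnd (ρAB x)
            = ∑ y ∈ Finset.univ.erase x, p y • ptraceSnd (ρAB y) := by
          rw [hρA_def, ← Finset.add_sum_erase _ _ (Finset.mem_univ x)]
          abel
        rw [e1]
        refine psd_sum _ _ fun y _ => ?_
        rw [real_smul_eq]
        exact psd_smul_c (by exact_mod_cast (hp y).le) (ptraceSnd_psd (hρ y).1)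
      have hsplit : ((dB / p x : ℝ) : ℂ) • (ρA ⊗ₖ (1 : Matrix B B ℂ)) - ρAB x
          = ((dB / p x : ℝ) : ℂ) • ((ρA - p x • ptraceSnd (ρAB x)) ⊗ₖ (1 : Matrix B B ℂ))
            + (dB • KT - ρAB x) := by
        ext r c
        obtain ⟨a, b⟩ := r
        obtain ⟨a', b'⟩ := c
        simp only [Matrix.sub_apply, Matrix.add_apply, Matrix.smul_apply,
          Matrix.kroneckerMap_apply, hKT, smul_eq_mul, Complex.real_smul, Matrix.one_apply]
        have hpx : (p x : ℂ) ≠ 0 := by exact_mod_cast (hp x).ne'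
        push_cast
        split_ifs with h
        · field_simp
          ring
        · ring
      rw [hsplit]
      refine Matrix.PosSemidef.add (psd_smul_c
        (by rw [Complex.zero_le_real]; have := hp x; positivity)
        (psd_kron hrest Matrix.PosSemidef.one)) ?_
      rw [hKT, hdB]
      exact key_traceout (hρ x).1
  -- step A
  have hAstep : ∀ lam ∈ SL, (∑ x, p x * Real.exp (sInf (SI x))) ≤ Real.exp lam := by
    rintro lam ⟨σ, hσdens, hσpsd⟩
    set qx : X → ℝ := fun x =>
      ((σ.submatrix (fun b : B => (b, x)) (fun b : B => (b, x))).trace).re with hqxd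
    have main : ∀ x : X, p x * Real.exp (sInf (SI x)) ≤ Real.exp lam * qx x := by
      intro x
      set τ' : Matrix B B ℂ := σ.submatrix (fun b : B => (b, x)) (fun b : B => (b, x)) with hτ'
      have hτ'psd : τ'.PosSemidef := hσdens.1.submatrix _
      have hsub := hσpsd.submatrix (fun ab : A × B => (ab.1, (ab.2, x)))
      have heq : (Real.exp lam • (ρA ⊗ₖ σ) - ρABX).submatrix
          (fun ab : A × B => (ab.1, (ab.2, x))) (fun ab : A × B => (ab.1, (ab.2, x)))
          = Real.exp lam • (ρA ⊗ₖ τ') - (p x : ℂ) • ρAB x := by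
        ext r r'
        obtain ⟨a, b⟩ := r
        obtain ⟨a', b'⟩ := r'
        simp only [Matrix.submatrix_apply, Matrix.sub_apply, Matrix.smul_apply,
          Matrix.kroneckerMap_apply, hρABX_apply, hτ', smul_eq_mul, Complex.real_smul,
          eq_self_iff_true, if_true]
      rw [heq] at hsub
      have htrτ : 0 ≤ τ'.trace := psd_trace_nonneg hτ'psd
      have hτtr_eq : τ'.trace = ((qx x : ℝ) : ℂ) := by
        have him := (Complex.nonneg_iff.mp htrτ).2
        apply Complex.ext
        · simp [hqxd, hτ']
        · simp [hqxd, ← him]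
      have hq0 : 0 ≤ qx x := by
        have h3 := (Complex.nonneg_iff.mp htrτ).1
        simpa [hqxd] using h3
      have hkey : p x ≤ Real.exp lam * qx x := by
        have h0 := psd_trace_nonneg hsub
        rw [Matrix.trace_sub, real_smul_eq, Matrix.trace_smul, Matrix.trace_smul,
          Matrix.trace_kronecker, hρA_tr, hτtr_eq, one_mul, htr x, smul_eq_mul, smul_eq_mul,
          mul_one] at h0
        have h2 := (Complex.nonneg_iff.mp h0).1
        rw [Complex.sub_re, sub_nonneg] at h2
        calc p x = ((p x : ℂ)).re := by simp
          _ ≤ (((Real.exp lam : ℝ) : ℂ) * ((qx x : ℝ) : ℂ)).re := h2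
          _ = Real.exp lam * qx x := by
              rw [← Complex.ofReal_mul, Complex.ofReal_re]
      have hqpos : 0 < qx x := by nlinarith [hp x, Real.exp_pos lam]
      have hτdens : IsDensity ((((qx x : ℝ) : ℂ))⁻¹ • τ') := by
        constructor
        · refine psd_smul_c ?_ hτ'psd
          rw [← Complex.ofReal_inv, Complex.zero_le_real]
          positivity
        · rw [Matrix.trace_smul, hτtr_eq, smul_eq_mul, ← Complex.ofReal_inv,
            ← Complex.ofReal_mul, inv_mul_cancel₀ hqpos.ne', Complex.ofReal_one]
      set μ : ℝ := Real.log (Real.exp lam * qx x / p x) with hμ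
      have hexpμ : Real.exp μ = Real.exp lam * qx x / p x :=
        Real.exp_log (by have := hp x; positivity)
      have hμmem : μ ∈ SI x := by
        refine ⟨(((qx x : ℝ) : ℂ))⁻¹ • τ', hτdens, ?_⟩
        have heq2 : Real.exp μ • (ρA ⊗ₖ ((((qx x : ℝ) : ℂ))⁻¹ • τ')) - ρAB x
            = ((p x : ℂ))⁻¹ • (Real.exp lam • (ρA ⊗ₖ τ') - (p x : ℂ) • ρAB x) := by
          ext r r'
          obtain ⟨a, b⟩ := r
          obtain ⟨a', b'⟩ := r'
          simp only [Matrix.sub_apply, Matrix.smul_apply, Matrix.kroneckerMap_apply,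
            smul_eq_mul, Complex.real_smul, hexpμ]
          have hpx : (p x : ℂ) ≠ 0 := by exact_mod_cast (hp x).ne'
          have hqx0 : ((qx x : ℝ) : ℂ) ≠ 0 := by exact_mod_cast hqpos.ne'
          push_cast
          field_simp
        rw [heq2]
        refine psd_smul_c ?_ hsub
        rw [← Complex.ofReal_inv, Complex.zero_le_real]
        have := hp x
        positivity
      have hle : sInf (SI x) ≤ μ := csInf_le (hSIbdd x) hμmem
      calc p x * Real.exp (sInf (SI x)) ≤ p x * Real.exp μ :=
            mul_le_mul_of_nonneg_left (Real.exp_le_exp.mpr hle) (hp x).le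
        _ = Real.exp lam * qx x := by
            rw [hexpμ, mul_div_assoc']
            exact mul_div_cancel_left₀ _ (hp x).ne'
    have hqsum : ∑ x, qx x = 1 := by
      have e0 : ∀ x : X, (σ.submatrix (fun b : B => (b, x)) (fun b : B => (b, x))).trace
          = ∑ b : B, σ (b, x) (b, x) := by
        intro x
        simp [Matrix.trace, Matrix.diag, Matrix.submatrix_apply]
      have e1 : ∑ x : X, (σ.submatrix (fun b : B => (b, x)) (fun b : B => (b, x))).trace
          = σ.trace := by
        rw [Finset.sum_congr rfl fun x _ => e0 x]
        rw [Finset.sum_comm]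
        symm
        simp [Matrix.trace, Matrix.diag, Fintype.sum_prod_type]
      have e2 := congrArg Complex.re e1
      rw [hσdens.2] at e2
      rw [Complex.re_sum] at e2
      simpa [hqxd] using e2
    calc ∑ x, p x * Real.exp (sInf (SI x)) ≤ ∑ x, Real.exp lam * qx x :=
          Finset.sum_le_sum fun x _ => main x
      _ = Real.exp lam := by rw [← Finset.mul_sum, hqsum, mul_one]
  -- step B
  have hBstep : ∀ ε : ℝ, 0 < ε → ∃ lam ∈ SL,
      Real.exp lam ≤ Real.exp ε * ∑ x, p x * Real.exp (sInf (SI x)) := by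
    intro ε hε
    have hpick : ∀ x : X, ∃ lam ∈ SI x, lam < sInf (SI x) + ε :=
      fun x => Real.lt_sInf_add_pos (hfeas x) hε
    choose lamf hlamf hlamflt using hpick
    choose τf hτfd hτfpsd using hlamf
    set c : X → ℝ := fun x => p x * Real.exp (lamf x) with hc
    have hcpos : ∀ x, 0 < c x := fun x => mul_pos (hp x) (Real.exp_pos _)
    set Cs : ℝ := ∑ x, c x with hCs
    have hCpos : 0 < Cs := Finset.sum_pos (fun x _ => hcpos x) Finset.univ_nonempty
    set q : X → ℝ := fun x => c x / Cs with hq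
    have hq0 : ∀ x, 0 ≤ q x := fun x => le_of_lt (div_pos (hcpos x) hCpos)
    have hqC : ∀ x, Cs * q x = c x := fun x => by
      rw [hq]
      field_simp
    have hqsum : ∑ x, q x = 1 := by
      rw [hq, ← Finset.sum_div]
      field_simp
      exact hCs.symm
    set σ : Matrix (B × X) (B × X) ℂ := Matrix.blockDiagonal (fun x => (q x : ℂ) • τf x) with hσd
    have hσdens : IsDensity σ := by
      constructor
      · exact psd_blockDiagonal fun x => psd_smul_c
          (by rw [Complex.zero_le_real]; exact hq0 x) (hτfd x).1
      · rw [hσd, Matrix.trace_blockDiagonal]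
        have e1 : ∀ x : X, ((q x : ℂ) • τf x).trace = (q x : ℂ) := by
          intro x
          rw [Matrix.trace_smul, (hτfd x).2, smul_eq_mul, mul_one]
        rw [Finset.sum_congr rfl fun x _ => e1 x, ← Complex.ofReal_sum, hqsum,
          Complex.ofReal_one]
    refine ⟨Real.log Cs, ⟨σ, hσdens, ?_⟩, ?_⟩
    · rw [Real.exp_log hCpos]
      have heq : (Cs • (ρA ⊗ₖ σ) - ρABX)
          = (Matrix.blockDiagonal
              (fun x => (p x : ℂ) • (Real.exp (lamf x) • (ρA ⊗ₖ τf x) - ρAB x))).submatrix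
              (fun r : A × (B × X) => ((r.1, r.2.1), r.2.2))
              (fun r : A × (B × X) => ((r.1, r.2.1), r.2.2)) := by
        ext r r'
        obtain ⟨a, b, x⟩ := r
        obtain ⟨a', b', x'⟩ := r'
        simp only [Matrix.sub_apply, Matrix.smul_apply, Matrix.kroneckerMap_apply,
          Matrix.submatrix_apply, Matrix.blockDiagonal_apply, hρABX_apply, hσd,
          smul_eq_mul, Complex.real_smul]
        by_cases hxx : x = x'
        · subst hxx
          simp only [if_pos rfl]
          have hcq : (Cs : ℂ) * (q x : ℂ) = (p x : ℂ) * (Real.exp (lamf x) : ℂ) := by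
            rw [← Complex.ofReal_mul, hqC x, hc, Complex.ofReal_mul]
          calc (Cs : ℂ) * (ρA a a' * ((q x : ℂ) * τf x b b'))
                - (p x : ℂ) * ρAB x (a, b) (a', b')
              = ((Cs : ℂ) * (q x : ℂ)) * (ρA a a' * τf x b b')
                - (p x : ℂ) * ρAB x (a, b) (a', b') := by ring
            _ = (p x : ℂ) * ((Real.exp (lamf x) : ℂ) * (ρA a a' * τf x b b')
                - ρAB x (a, b) (a', b')) := by rw [hcq]; ring
        · simp [hxx]
      rw [heq]
      refine Matrix.PosSemidef.submatrix ?_ _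
      refine psd_blockDiagonal fun x => psd_smul_c
        (by rw [Complex.zero_le_real]; exact (hp x).le) ?_
      exact hτfpsd x
    · rw [Real.exp_log hCpos, hCs]
      have hle : ∀ x : X, c x ≤ p x * (Real.exp ε * Real.exp (sInf (SI x))) := by
        intro x
        simp only [hc]
        refine mul_le_mul_of_nonneg_left ?_ (hp x).le
        calc Real.exp (lamf x) ≤ Real.exp (sInf (SI x) + ε) := Real.exp_le_exp.mpr (hlamflt x).le
          _ = Real.exp ε * Real.exp (sInf (SI x)) := by rw [Real.exp_add]; ring
      calc ∑ x, c x ≤ ∑ x, p x * (Real.exp ε * Real.exp (sInf (SI x))) :=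
            Finset.sum_le_sum fun x _ => hle x
        _ = Real.exp ε * ∑ x, p x * Real.exp (sInf (SI x)) := by
            rw [Finset.mul_sum]
            exact Finset.sum_congr rfl fun x _ => by ring
  -- T
  set T : ℝ := ∑ x, p x * Real.exp (sInf (SI x)) with hTdef
  have hTpos : 0 < T :=
    Finset.sum_pos (fun x _ => mul_pos (hp x) (Real.exp_pos _)) Finset.univ_nonempty
  have hSLne : SL.Nonempty := by
    obtain ⟨lam, hlam, _⟩ := hBstep 1 one_pos
    exact ⟨lam, hlam⟩
  -- the two EReal identities
  have hL : L = ((sInf SL : ℝ) : EReal) := by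
    have := nested_sInf (fun σ : Matrix (B × X) (B × X) ℂ => IsDensity σ)
      (fun σ lam => (Real.exp lam • (ρA ⊗ₖ σ) - ρABX).PosSemidef)
      (by obtain ⟨lam, σ, hσ, hF⟩ := hSLne; exact ⟨lam, σ, hσ, hF⟩)
      hlbL
    exact this
  have hI : ∀ x, I x = ((sInf (SI x) : ℝ) : EReal) := by
    intro x
    have := nested_sInf (fun τ : Matrix B B ℂ => IsDensity τ)
      (fun τ lam => (Real.exp lam • (ρA ⊗ₖ τ) - ρAB x).PosSemidef)
      (by obtain ⟨lam, τ, hτ, hF⟩ := hfeas x; exact ⟨lam, τ, hτ, hF⟩)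
      (hlbI x)
    exact this
  -- complete the real计算
  have hup : T ≤ Real.exp (sInf SL) := by
    have h1 : Real.log T ≤ sInf SL := by
      refine le_csInf hSLne fun lam hlam => ?_
      have h2 := hAstep lam hlam
      calc Real.log T ≤ Real.log (Real.exp lam) := Real.log_le_log hTpos h2
        _ = lam := Real.log_exp lam
    calc T = Real.exp (Real.log T) := (Real.exp_log hTpos).symm
      _ ≤ Real.exp (sInf SL) := Real.exp_le_exp.mpr h1
  have hdown : Real.exp (sInf SL) ≤ T := by
    by_contra hlt
    push_neg at hlt
    set δ : ℝ := Real.log (Real.exp (sInf SL) / T) with hδ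
    have hδpos : 0 < δ := Real.log_pos ((one_lt_div hTpos).mpr hlt)
    obtain ⟨lam, hlam, hbd⟩ := hBstep (δ / 2) (by linarith)
    have h3 : sInf SL ≤ lam := csInf_le hSLbdd hlam
    have h4 : Real.exp (sInf SL) ≤ Real.exp lam := Real.exp_le_exp.mpr h3
    have h5 : Real.exp (δ / 2) * T < Real.exp δ * T := by
      have := Real.exp_lt_exp.mpr (show δ / 2 < δ by linarith)
      exact mul_lt_mul_of_pos_right this hTpos
    have h6 : Real.exp δ * T = Real.exp (sInf SL) := by
      rw [hδ, Real.exp_log (by positivity)]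
      field_simp
    linarith
  have hmain : Real.exp (sInf SL) = T := le_antisymm hdown hup
  refine ⟨by rw [hL]; exact EReal.coe_ne_top _, by rw [hL]; exact EReal.coe_ne_bot _,
    fun x => ⟨by rw [hI x]; exact EReal.coe_ne_top _, by rw [hI x]; exact EReal.coe_ne_bot _⟩, ?_⟩
  rw [hL, EReal.toReal_coe]
  rw [hmain, hTdef]
  refine Finset.sum_congr rfl fun x _ => ?_
  rw [hI x, EReal.toReal_coe]
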